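/- Let G be a connected finite simple graph of order n ≥ 12 in which every pair of distinct nonadjacent vertices has degree sum at least n − 2, and suppose m(G,2) > 2. Let I be a set of maximum cardinality among all closures ⟨A⟩ of two-element sets A ⊆ V(G) under 2-neighbor bootstrap percolation, and let U = V(G) ∖ I. Then every vertex w ∈ I that has no neighbor in U is nonadjacent to at most one vertex of I ∖ {w}. -/

import Mathlib

open Finset
open scoped Classical

/-- One step of the `r`-neighbor bootstrap percolation process: all currently
active vertices stay active, and every vertex with at least `r` active
neighbors becomes active. -/
noncomputable def bootStep {V : Type*} [Fintype V] (G : SimpleGraph V) (r : ℕ)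
    (A : Finset V) : Finset V :=
  A ∪ Finset.univ.filter (fun v => r ≤ (G.neighborFinset v ∩ A).card)

/-- The closure of `A` under `r`-neighbor bootstrap percolation, i.e. `⋃ₜ Aₜ`.
Since the process is monotone on a finite vertex set, iterating `|V|` times
reaches the fixed point. -/
noncomputable def bootClosure {V : Type*} [Fintype V] (G : SimpleGraph V) (r : ℕ)
    (A : Finset V) : Finset V :=
  (bootStep G r)^[Fintype.card V] A

/-- `G` `r`-percolates from the initially active set `A`. -/
def Percolates {V : Type*} [Fintype V] (G : SimpleGraph V) (r : ℕ)
    (A : Finset V) : Prop :=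
  ∃ t : ℕ, (bootStep G r)^[t] A = Finset.univ

/-- `m(G, r)`: the minimum size of an `r`-contagious set in `G`. -/
noncomputable def minContagious {V : Type*} [Fintype V] (G : SimpleGraph V) (r : ℕ) : ℕ :=
  sInf {k : ℕ | ∃ A : Finset V, A.card = k ∧ Percolates G r A}

lemma bootStep_closure_fixed {V : Type*} [Fintype V] (G : SimpleGraph V) (r : ℕ)
    (A : Finset V) : bootStep G r (bootClosure G r A) = bootClosure G r A := by
  set f := bootStep G r with hf
  set n := Fintype.card V with hn
  have hmono : ∀ B : Finset V, B ⊆ f B := fun B => Finset.subset_union_left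
  have hchain : ∀ t, f^[t] A ⊆ f^[t+1] A := by
    intro t
    rw [Function.iterate_succ_apply']
    exact hmono _
  have key : ∃ t ≤ n, f^[t+1] A = f^[t] A := by
    by_contra h
    push_neg at h
    have hcard : ∀ t, t ≤ n + 1 → t ≤ (f^[t] A).card := by
      intro t
      induction t with
      | zero => intro _; exact Nat.zero_le _
      | succ s ih =>
        intro hs
        have hss : s ≤ n := by omega
        have h1 : f^[s] A ⊂ f^[s+1] A :=
          Finset.ssubset_iff_subset_ne.2 ⟨hchain s, fun e => h s hss e.symm⟩
        have h2 := Finset.card_lt_card h1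
        have h3 := ih (by omega)
        omega
    have h4 := hcard (n + 1) le_rfl
    have h5 := Finset.card_le_univ (f^[n+1] A)
    omega
  obtain ⟨t, ht, hfix⟩ := key
  have stable : ∀ s, f^[t + s] A = f^[t] A := by
    intro s
    induction s with
    | zero => rfl
    | succ s ih =>
      have : t + (s + 1) = (t + s) + 1 := by omega
      rw [this, Function.iterate_succ_apply', ih]
      exact (Function.iterate_succ_apply' f t A).symm.trans hfix
  have hcl : bootClosure G r A = f^[t] A := by
    show f^[n] A = f^[t] A
    have : n = t + (n - t) := by omega
    rw [this, stable]
  rw [hcl]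
  exact (Function.iterate_succ_apply' f t A).symm.trans hfix

theorem stmt8 {V : Type*} [Fintype V] (G : SimpleGraph V)
    (hconn : G.Connected) (hn : 12 ≤ Fintype.card V)
    (hdeg : ∀ x y : V, x ≠ y → ¬ G.Adj x y →
      Fintype.card V - 2 ≤ G.degree x + G.degree y)
    (hm : 2 < minContagious G 2)
    (I : Finset V)
    (hIcl : ∃ A : Finset V, A.card = 2 ∧ I = bootClosure G 2 A)
    (hImax : ∀ A : Finset V, A.card = 2 → (bootClosure G 2 A).card ≤ I.card)
    (w : V) (hw : w ∈ I)
    (hwU : ∀ u ∈ Finset.univ \ I, ¬ G.Adj w u) :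
    ((I.erase w).filter (fun z => ¬ G.Adj w z)).card ≤ 1 := by
  obtain ⟨A, hA2, hIA⟩ := hIcl
  set S := (I.erase w).filter (fun z => ¬ G.Adj w z) with hS
  -- I ≠ univ
  have hInotuniv : I ≠ Finset.univ := by
    intro h
    have hperc : Percolates G 2 A :=
      ⟨Fintype.card V, by
        rw [show (bootStep G 2)^[Fintype.card V] A = bootClosure G 2 A from rfl, ← hIA, h]⟩
    have : minContagious G 2 ≤ 2 := Nat.sInf_le ⟨A, hA2, hperc⟩
    omega
  obtain ⟨u, huI⟩ : ∃ u, u ∉ I := by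
    by_contra h
    push_neg at h
    exact hInotuniv (Finset.eq_univ_iff_forall.2 h)
  have hclosed : bootStep G 2 I = I := by
    rw [hIA]; exact bootStep_closure_fixed G 2 A
  -- u has at most one neighbor in I
  have hu1 : (G.neighborFinset u ∩ I).card ≤ 1 := by
    by_contra h
    push_neg at h
    have hmem : u ∈ bootStep G 2 I := by
      refine Finset.mem_union_right _ (Finset.mem_filter.2 ⟨Finset.mem_univ u, ?_⟩)
      omega
    rw [hclosed] at hmem
    exact huI hmem
  -- degree bound for u
  have hdu : G.degree u ≤ Fintype.card V - I.card := by
    have h1 : G.neighborFinset u ⊆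
        (G.neighborFinset u ∩ I) ∪ ((Finset.univ \ I).erase u) := by
      intro v hv
      by_cases hvI : v ∈ I
      · exact Finset.mem_union_left _ (Finset.mem_inter.2 ⟨hv, hvI⟩)
      · refine Finset.mem_union_right _ (Finset.mem_erase.2
          ⟨?_, Finset.mem_sdiff.2 ⟨Finset.mem_univ v, hvI⟩⟩)
        rintro rfl
        exact G.loopless.irrefl v ((SimpleGraph.mem_neighborFinset G v v).1 hv)
    have h2 := Finset.card_le_card h1
    have h3 := Finset.card_union_le (G.neighborFinset u ∩ I) ((Finset.univ \ I).erase u)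
    have h4 : ((Finset.univ \ I).erase u).card = (Finset.univ \ I).card - 1 :=
      Finset.card_erase_of_mem (Finset.mem_sdiff.2 ⟨Finset.mem_univ u, huI⟩)
    have h5 : (Finset.univ \ I).card = Fintype.card V - I.card := by
      rw [Finset.card_sdiff_of_subset (Finset.subset_univ I), Finset.card_univ]
    have h6 : 1 ≤ (Finset.univ \ I).card :=
      Finset.card_pos.2 ⟨u, Finset.mem_sdiff.2 ⟨Finset.mem_univ u, huI⟩⟩
    have h7 : (G.neighborFinset u).card = G.degree u := G.card_neighborFinset_eq_degree u
    omega
  -- degree bound for w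
  have hNw : G.neighborFinset w ⊆ (I.erase w) \ S := by
    intro v hv
    have hadj : G.Adj w v := (SimpleGraph.mem_neighborFinset G w v).1 hv
    have hvI : v ∈ I := by
      by_contra hvI
      exact hwU v (Finset.mem_sdiff.2 ⟨Finset.mem_univ v, hvI⟩) hadj
    refine Finset.mem_sdiff.2 ⟨Finset.mem_erase.2 ⟨?_, hvI⟩, ?_⟩
    · rintro rfl; exact G.loopless.irrefl _ hadj
    · intro hvS
      exact (Finset.mem_filter.1 hvS).2 hadj
  have hSsub : S ⊆ I.erase w := Finset.filter_subset _ _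
  have hdw : G.degree w ≤ I.card - 1 - S.card := by
    have h1 := Finset.card_le_card hNw
    rw [Finset.card_sdiff_of_subset hSsub, Finset.card_erase_of_mem hw] at h1
    have h7 : (G.neighborFinset w).card = G.degree w := G.card_neighborFinset_eq_degree w
    omega
  have hne : w ≠ u := fun h => huI (h ▸ hw)
  have hnadj : ¬ G.Adj w u := hwU u (Finset.mem_sdiff.2 ⟨Finset.mem_univ u, huI⟩)
  have hsum := hdeg w u hne hnadj
  have hkI : S.card ≤ I.card - 1 := by
    have := Finset.card_le_card hSsub
    rwa [Finset.card_erase_of_mem hw] at this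
  have hIn : I.card ≤ Fintype.card V := Finset.card_le_univ I
  have hw1 : 1 ≤ I.card := Finset.card_pos.2 ⟨w, hw⟩
  omega
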